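/- Let Γ be a connected k-regular graph on n vertices with adjacency spectrum {[k]¹, [k/2]^α, [0]^β, [-k/2]^γ}. Then the number of triangles through any fixed vertex x equals 3k³/(8n), assuming (A³)_{x,x} is independent of x (walk-regularity). Moreover n ≤ (3/4)k³. -/

import Mathlib

open Polynomial Finset

lemma tri_count {V : Type*} [Fintype V] [DecidableEq V] (G : SimpleGraph V)
    [DecidableRel G.Adj] (x : V) :
    ((G.adjMatrix ℝ) ^ 3) x x
      = 2 * (((G.cliqueFinset 3).filter (fun s => x ∈ s)).card : ℝ) := by
  classical
  set S : Finset (V × V) :=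
    univ.filter (fun p => G.Adj x p.1 ∧ G.Adj p.1 p.2 ∧ G.Adj p.2 x) with hS
  set T := (G.cliqueFinset 3).filter (fun s => x ∈ s) with hT
  have h1 : ((G.adjMatrix ℝ) ^ 3) x x = (S.card : ℝ) := by
    have : ((G.adjMatrix ℝ) ^ 3) x x
        = ∑ p : V × V, (if G.Adj x p.1 ∧ G.Adj p.1 p.2 ∧ G.Adj p.2 x then (1:ℝ) else 0) := by
      rw [pow_succ, pow_succ, pow_one, Matrix.mul_apply]
      simp only [Matrix.mul_apply, SimpleGraph.adjMatrix_apply, Finset.sum_mul]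
      rw [Fintype.sum_prod_type]
      apply Finset.sum_congr rfl; intro a _
      apply Finset.sum_congr rfl; intro b _
      split_ifs <;> simp_all [SimpleGraph.adj_comm]
    rw [this, Finset.sum_boole, hS]
  have key : ∀ t ∈ T, (S.filter (fun p => ({x, p.1, p.2} : Finset V) = t)).card = 2 := by
    intro t ht
    rw [hT, Finset.mem_filter, SimpleGraph.mem_cliqueFinset_iff, SimpleGraph.is3Clique_iff] at ht
    obtain ⟨⟨a, b, c, hab, hac, hbc, rfl⟩, hx⟩ := ht
    simp only [Finset.mem_insert, Finset.mem_singleton] at hx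
    obtain ⟨p, q, hxp, hxq, hpq, hteq⟩ :
        ∃ p q, G.Adj x p ∧ G.Adj x q ∧ G.Adj p q ∧ ({a, b, c} : Finset V) = {x, p, q} := by
      rcases hx with rfl | rfl | rfl
      · exact ⟨b, c, hab, hac, hbc, rfl⟩
      · exact ⟨a, c, hab.symm, hbc, hac, by ext y; simp; tauto⟩
      · exact ⟨a, b, hac.symm, hbc.symm, hab, by ext y; simp; tauto⟩
    rw [hteq]
    have hpqne : p ≠ q := G.ne_of_adj hpq
    have : S.filter (fun p' => ({x, p'.1, p'.2} : Finset V) = {x, p, q})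
        = {(p, q), (q, p)} := by
      ext ⟨a', b'⟩
      simp only [Finset.mem_filter, hS, Finset.mem_insert, Finset.mem_singleton,
        Finset.mem_univ, true_and, Prod.mk.injEq]
      constructor
      · rintro ⟨⟨hxa', ha'b', hb'x⟩, hset⟩
        have hax : a' ≠ x := (G.ne_of_adj hxa').symm
        have hbx : b' ≠ x := G.ne_of_adj hb'x
        have hane : a' ≠ b' := G.ne_of_adj ha'b'
        have ha'm : a' ∈ ({x, p, q} : Finset V) := by rw [← hset]; simp
        have hb'm : b' ∈ ({x, p, q} : Finset V) := by rw [← hset]; simp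
        simp only [Finset.mem_insert, Finset.mem_singleton] at ha'm hb'm
        rcases ha'm with h | h | h
        · exact absurd h hax
        · subst h
          rcases hb'm with h' | h' | h'
          · exact absurd h' hbx
          · exact absurd h' hane.symm
          · exact Or.inl ⟨rfl, h'⟩
        · subst h
          rcases hb'm with h' | h' | h'
          · exact absurd h' hbx
          · exact Or.inr ⟨rfl, h'⟩
          · exact absurd h' hane.symm
      · rintro (⟨rfl, rfl⟩ | ⟨rfl, rfl⟩)
        · exact ⟨⟨hxp, hpq, hxq.symm⟩, rfl⟩
        · refine ⟨⟨hxq, hpq.symm, hxp.symm⟩, ?_⟩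
          rw [Finset.pair_comm b' a']
    rw [this]
    rw [Finset.card_insert_of_notMem (by simp [hpqne]), Finset.card_singleton]
  have h2 : S.card = 2 * T.card := by
    rw [Finset.card_eq_sum_card_fiberwise
      (f := fun p => ({x, p.1, p.2} : Finset V)) (t := T) ?_]
    · rw [Finset.sum_congr rfl key, Finset.sum_const, smul_eq_mul, mul_comm]
    · rintro ⟨a, b⟩ hp
      simp only [Finset.mem_coe, hS, Finset.mem_filter] at hp
      obtain ⟨-, hxa, hab, hbx⟩ := hp
      rw [Finset.mem_coe, hT, Finset.mem_filter, SimpleGraph.mem_cliqueFinset_iff,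
        SimpleGraph.is3Clique_triple_iff]
      exact ⟨⟨hxa, hbx.symm, hab⟩, by simp⟩
  rw [h1, h2]; push_cast; ring

lemma conj_pow3 {V : Type*} [Fintype V] [DecidableEq V] (U B M : Matrix V V ℝ)
    (h2 : star U * U = 1) (hM : M = U * B * star U) :
    M ^ 3 = U * B ^ 3 * star U := by
  subst hM
  have e : ∀ X Y : Matrix V V ℝ, (U * X * star U) * (U * Y * star U) = U * (X * Y) * star U := by
    intro X Y
    calc (U * X * star U) * (U * Y * star U) = U * X * (star U * U) * Y * star U := by
          noncomm_ring
      _ = U * (X * Y) * star U := by rw [h2]; noncomm_ring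
  rw [pow_succ, pow_succ, pow_one, e, e, pow_succ, pow_succ, pow_one]

lemma conj_charpoly {V : Type*} [Fintype V] [DecidableEq V] (U B M : Matrix V V ℝ)
    (h1 : U * star U = 1) (hM : M = U * B * star U) :
    M.charpoly = B.charpoly := by
  subst hM
  have hchm : Matrix.charmatrix (U * B * star U)
      = (U.map C) * Matrix.charmatrix B * ((star U).map C) := by
    rw [Matrix.charmatrix, Matrix.charmatrix, Matrix.mul_sub, Matrix.sub_mul]
    congr 1
    · rw [Matrix.scalar_apply, ← Matrix.smul_one_eq_diagonal, Matrix.mul_smul,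
        Matrix.smul_mul, Matrix.mul_one, ← Matrix.map_mul, h1]
      simp
    · simp only [RingHom.mapMatrix_apply]
      rw [← Matrix.map_mul, ← Matrix.map_mul]
  rw [Matrix.charpoly, Matrix.charpoly, hchm, Matrix.det_mul, Matrix.det_mul,
    mul_comm ((U.map C).det), mul_assoc, ← Matrix.det_mul, ← Matrix.map_mul, h1]
  simp

lemma charpoly_eq_prod {V : Type*} [Fintype V] [DecidableEq V] {A : Matrix V V ℝ}
    (hA : A.IsHermitian) :
    A.charpoly = ∏ i : V, (X - C (hA.eigenvalues i)) := by
  classical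
  have hD : A = (hA.eigenvectorUnitary : Matrix V V ℝ) * Matrix.diagonal hA.eigenvalues
      * star (hA.eigenvectorUnitary : Matrix V V ℝ) := by
    have := hA.spectral_theorem
    simpa [Function.comp] using this
  rw [conj_charpoly _ _ _ ((Matrix.mem_unitaryGroup_iff).mp hA.eigenvectorUnitary.2) hD]
  rw [Matrix.charpoly]
  have : Matrix.charmatrix (Matrix.diagonal hA.eigenvalues)
      = Matrix.diagonal (fun i => X - C (hA.eigenvalues i)) := by
    ext i j
    by_cases h : i = j
    · subst h; simp
    · simp [Matrix.charmatrix_apply_ne _ _ _ h, Matrix.diagonal_apply_ne _ h]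
  rw [this, Matrix.det_diagonal]

lemma trace_pow_three {V : Type*} [Fintype V] [DecidableEq V] {A : Matrix V V ℝ}
    (hA : A.IsHermitian) :
    Matrix.trace (A ^ 3) = ∑ i : V, (hA.eigenvalues i) ^ 3 := by
  classical
  have hD : A = (hA.eigenvectorUnitary : Matrix V V ℝ) * Matrix.diagonal hA.eigenvalues
      * star (hA.eigenvectorUnitary : Matrix V V ℝ) := by
    have := hA.spectral_theorem
    simpa [Function.comp] using this
  rw [conj_pow3 _ _ _ (Matrix.UnitaryGroup.star_mul_self _) hD,
    Matrix.trace_mul_cycle, Matrix.UnitaryGroup.star_mul_self,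
    Matrix.one_mul, Matrix.diagonal_pow, Matrix.trace_diagonal]
  simp [Pi.pow_apply]

lemma trace_eigen {V : Type*} [Fintype V] [DecidableEq V] {A : Matrix V V ℝ}
    (hA : A.IsHermitian) :
    Matrix.trace A = ∑ i : V, hA.eigenvalues i := by
  have hD : A = (hA.eigenvectorUnitary : Matrix V V ℝ) * Matrix.diagonal hA.eigenvalues
      * star (hA.eigenvectorUnitary : Matrix V V ℝ) := by
    have := hA.spectral_theorem
    simpa [Function.comp] using this
  conv_lhs => rw [hD]
  rw [Matrix.trace_mul_cycle, Matrix.UnitaryGroup.star_mul_self, Matrix.one_mul,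
    Matrix.trace_diagonal]

/-- For a connected `k`-regular graph on `n` vertices with adjacency spectrum
`{[k]¹, [k/2]^α, [0]^β, [-k/2]^γ}`, assuming `(A³)_{x,x}` is independent of `x`
(walk-regularity), the number of triangles through any vertex `x` equals `3k³/(8n)`,
and `n ≤ (3/4)k³`. -/
theorem stmt_15 {V : Type*} [Fintype V] [DecidableEq V] (G : SimpleGraph V)
    [DecidableRel G.Adj] (n k α β γ : ℕ) (hk : 0 < k)
    (hn : Fintype.card V = n)
    (hreg : G.IsRegularOfDegree k) (hconn : G.Connected)
    (hchar : (G.adjMatrix ℝ).charpoly =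
      (X - C (k : ℝ)) * (X - C ((k : ℝ) / 2)) ^ α * X ^ β * (X + C ((k : ℝ) / 2)) ^ γ)
    (hwalk : ∀ y z : V, ((G.adjMatrix ℝ) ^ 3) y y = ((G.adjMatrix ℝ) ^ 3) z z)
    (x : V) :
    ((((G.cliqueFinset 3).filter (fun s => x ∈ s)).card : ℝ)
        = 3 * (k : ℝ) ^ 3 / (8 * (n : ℝ))) ∧
    (n : ℝ) ≤ 3 / 4 * (k : ℝ) ^ 3 := by
  classical
  have hA : (G.adjMatrix ℝ).IsHermitian := by
    ext i j
    simp [Matrix.conjTranspose_apply, SimpleGraph.adj_comm]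
  set lam := hA.eigenvalues with hlam
  -- roots multiset
  have hroots : (univ : Finset V).val.map lam
      = {(k:ℝ)} + α • {(k:ℝ)/2} + β • {(0:ℝ)} + γ • {-((k:ℝ)/2)} := by
    have h1 : (∏ i : V, (X - C (lam i))).roots = (univ : Finset V).val.map lam := by
      rw [Finset.prod_eq_multiset_prod]
      simpa [Multiset.map_map, Function.comp_def] using
        roots_multiset_prod_X_sub_C ((univ : Finset V).val.map lam)
    rw [← h1, ← charpoly_eq_prod hA, hchar]
    have e1 : (X + C ((k:ℝ) / 2) : ℝ[X]) = X - C (-((k:ℝ) / 2)) := by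
      rw [map_neg, sub_neg_eq_add]
    rw [e1, roots_mul, roots_mul, roots_mul, roots_pow, roots_pow, roots_pow, roots_X_sub_C,
      roots_X_sub_C, roots_X_sub_C, roots_X]
    · exact mul_ne_zero (X_sub_C_ne_zero _) (pow_ne_zero _ (X_sub_C_ne_zero _))
    · exact mul_ne_zero (mul_ne_zero (X_sub_C_ne_zero _) (pow_ne_zero _ (X_sub_C_ne_zero _)))
        (pow_ne_zero _ X_ne_zero)
    · exact mul_ne_zero (mul_ne_zero (mul_ne_zero (X_sub_C_ne_zero _)
        (pow_ne_zero _ (X_sub_C_ne_zero _))) (pow_ne_zero _ X_ne_zero))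
        (pow_ne_zero _ (X_sub_C_ne_zero _))
  -- first power sum
  have eq1 : (0:ℝ) = k + α * ((k:ℝ)/2) + γ * (-((k:ℝ)/2)) := by
    have h0 : Matrix.trace (G.adjMatrix ℝ) = 0 := G.trace_adjMatrix ℝ
    rw [trace_eigen hA] at h0
    have hs : ∑ i : V, lam i = ((univ : Finset V).val.map lam).sum := rfl
    rw [← h0, hs, hroots]
    simp [Multiset.nsmul_singleton, Multiset.sum_replicate, nsmul_eq_mul]
    ring
  -- third power sum
  have eq3 : Matrix.trace ((G.adjMatrix ℝ) ^ 3)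
      = (k:ℝ)^3 + α * ((k:ℝ)/2)^3 + γ * (-((k:ℝ)/2))^3 := by
    rw [trace_pow_three hA]
    have hs : ∑ i : V, lam i ^ 3 = (((univ : Finset V).val.map lam).map (fun a => a ^ 3)).sum := by
      rw [Multiset.map_map]; rfl
    rw [hs, hroots]
    simp [Multiset.nsmul_singleton, Multiset.sum_replicate, nsmul_eq_mul]
    ring
  -- trace as n times a diagonal entry
  have hNV : Nonempty V := hconn.nonempty
  have hnpos : 0 < n := by rw [← hn]; exact Fintype.card_pos
  set t : ℝ := (((G.cliqueFinset 3).filter (fun s => x ∈ s)).card : ℝ) with ht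
  have htrace : Matrix.trace ((G.adjMatrix ℝ) ^ 3) = n * (2 * t) := by
    have : Matrix.trace ((G.adjMatrix ℝ) ^ 3) = ∑ y : V, ((G.adjMatrix ℝ) ^ 3) y y := rfl
    rw [this, Finset.sum_congr rfl (fun y _ => hwalk y x), Finset.sum_const, ← hn]
    rw [tri_count G x]
    simp [nsmul_eq_mul]
    exact ht.symm
  have hK : (0:ℝ) < k := by exact_mod_cast hk
  have hN : (0:ℝ) < n := by exact_mod_cast hnpos
  have key : 2 * t * n = 3 / 4 * (k:ℝ)^3 := by
    have h1 : (γ:ℝ) * ((k:ℝ)/2) = k + α * ((k:ℝ)/2) := by linarith [eq1]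
    have h2 : (n:ℝ) * (2 * t) = (k:ℝ)^3 + α * ((k:ℝ)/2)^3 + γ * (-((k:ℝ)/2))^3 := by
      rw [← htrace, eq3]
    nlinarith [h1, h2, sq_nonneg ((k:ℝ)/2)]
  constructor
  · rw [ht]
    field_simp
    linarith [key]
  · -- t is a positive integer: t ≥ 1
    have htnat : ∃ m : ℕ, t = m := ⟨_, rfl⟩
    have hone : 1 ≤ t := by
      obtain ⟨m, hm⟩ := htnat
      rcases Nat.eq_zero_or_pos m with h | h
      · exfalso; rw [hm, h] at key; push_cast at key; nlinarith [pow_pos hK 3]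
      · rw [hm]; exact_mod_cast h
    nlinarith [key, hone, hN, pow_pos hK 3,
      mul_le_mul_of_nonneg_right hone (le_of_lt hN)]
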